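/- Deciding whether a symmetric correlation vector for n parties with 2 binary settings lies in the symmetrized local polytope can be done by checking membership in the convex hull of at most (n+1)(n+2)(n+3)/6 points in a space of dimension n(n+3)/2; in particular the size of this description is polynomial in n, in contrast with the 4^n vertices and dimension 3^n − 1 of the full local polytope. -/

import Mathlib

section Aux

variable {n : ℕ}
  {vert : (Fin n → Fin 2 → Fin 2) → ((Fin n → Fin 2) × (Fin n → Fin 2)) → ℝ}
  {sym : (((Fin n → Fin 2) × (Fin n → Fin 2)) → ℝ) →
         (((Fin n → Fin 2) × (Fin n → Fin 2)) → ℝ)}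

lemma stmt17_vert_eq
    (hvert : ∀ a s r, vert a (s, r) = if (∀ i, r i = a i (s i)) then 1 else 0)
    (a : Fin n → Fin 2 → Fin 2) (σ : Equiv.Perm (Fin n)) (s r : Fin n → Fin 2) :
    vert (a ∘ σ) (s, r) = vert a (s ∘ ⇑σ⁻¹, r ∘ ⇑σ⁻¹) := by
  rw [hvert, hvert]
  refine if_congr ⟨fun h j => ?_, fun h i => ?_⟩ rfl rfl
  · simpa using h (σ⁻¹ j)
  · simpa using h (σ i)

lemma stmt17_sym_vert_comp
    (hvert : ∀ a s r, vert a (s, r) = if (∀ i, r i = a i (s i)) then 1 else 0)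
    (hsym : ∀ v, sym v = (n.factorial : ℝ)⁻¹ •
      ∑ σ : Equiv.Perm (Fin n), fun sr => v (sr.1 ∘ σ, sr.2 ∘ σ))
    (a : Fin n → Fin 2 → Fin 2) (σ0 : Equiv.Perm (Fin n)) :
    sym (vert (a ∘ σ0)) = sym (vert a) := by
  funext sr
  obtain ⟨s, r⟩ := sr
  rw [hsym, hsym]
  simp only [Pi.smul_apply, Finset.sum_apply, smul_eq_mul]
  congr 1
  refine Fintype.sum_equiv (Equiv.mulRight σ0⁻¹) _ _ fun τ => ?_
  rw [stmt17_vert_eq hvert]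
  simp [Equiv.Perm.coe_mul, Function.comp_assoc]

lemma stmt17_sym_eq_self
    (hsym : ∀ v, sym v = (n.factorial : ℝ)⁻¹ •
      ∑ σ : Equiv.Perm (Fin n), fun sr => v (sr.1 ∘ σ, sr.2 ∘ σ))
    (p : ((Fin n → Fin 2) × (Fin n → Fin 2)) → ℝ)
    (hp : ∀ σ : Equiv.Perm (Fin n), (fun sr => p (sr.1 ∘ σ, sr.2 ∘ σ)) = p) :
    sym p = p := by
  rw [hsym, Finset.sum_congr rfl (fun σ _ => hp σ), Finset.sum_const,
    Finset.card_univ, Fintype.card_perm, Fintype.card_fin, ← Nat.cast_smul_eq_nsmul ℝ, smul_smul,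
    inv_mul_cancel₀ (Nat.cast_ne_zero.mpr n.factorial_ne_zero), one_smul]

lemma stmt17_sym_linear
    (hsym : ∀ v, sym v = (n.factorial : ℝ)⁻¹ •
      ∑ σ : Equiv.Perm (Fin n), fun sr => v (sr.1 ∘ σ, sr.2 ∘ σ)) :
    IsLinearMap ℝ sym := by
  constructor
  · intro v w
    funext sr
    simp only [hsym, Pi.smul_apply, Finset.sum_apply, Pi.add_apply, smul_eq_mul,
      Finset.sum_add_distrib, mul_add]
  · intro c v
    funext sr
    simp only [hsym, Pi.smul_apply, Finset.sum_apply, smul_eq_mul, ← Finset.mul_sum]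
    ring

end Aux

/-- For the `(n,2,2)` Bell scenario, a symmetric correlation vector `p`
(invariant under all party permutations) is local — i.e. lies in the convex hull of the
`4^n` deterministic vertices — if and only if it is a convex combination of the
projections of the deterministic vertices onto the symmetric subspace, of which there
are at most `(n+1)(n+2)(n+3)/6` distinct ones; in particular the symmetrized
description has polynomial size in `n`. -/
theorem stmt17 (n : ℕ)
    (vert : (Fin n → Fin 2 → Fin 2) → ((Fin n → Fin 2) × (Fin n → Fin 2)) → ℝ)
    (hvert : ∀ a s r, vert a (s, r) = if (∀ i, r i = a i (s i)) then 1 else 0)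
    (sym : (((Fin n → Fin 2) × (Fin n → Fin 2)) → ℝ) →
           (((Fin n → Fin 2) × (Fin n → Fin 2)) → ℝ))
    (hsym : ∀ v, sym v = (n.factorial : ℝ)⁻¹ •
      ∑ σ : Equiv.Perm (Fin n), fun sr => v (sr.1 ∘ σ, sr.2 ∘ σ)) :
    Set.ncard (Set.range (fun a => sym (vert a))) ≤ (n + 1) * (n + 2) * (n + 3) / 6 ∧
    ∀ p : ((Fin n → Fin 2) × (Fin n → Fin 2)) → ℝ,
      (∀ σ : Equiv.Perm (Fin n), (fun sr => p (sr.1 ∘ σ, sr.2 ∘ σ)) = p) →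
      (p ∈ convexHull ℝ (Set.range vert) ↔
       p ∈ convexHull ℝ (Set.range (fun a => sym (vert a)))) := by
  set e : (Fin 2 → Fin 2) ≃ Fin (2 ^ 2) := finFunctionFinEquiv with he
  set f : (Fin n → Fin 2 → Fin 2) → ((Fin n → Fin 2) × (Fin n → Fin 2)) → ℝ :=
    fun a => sym (vert a) with hf
  set M : Set (Fin n → Fin 2 → Fin 2) := {a | Monotone (e ∘ a)} with hM
  constructor
  · -- cardinality bound
    have hA : Set.range f ⊆ f '' M := by
      rintro _ ⟨a, rfl⟩
      refine ⟨a ∘ Tuple.sort (e ∘ a), ?_, ?_⟩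
      · exact Tuple.monotone_sort (e ∘ a)
      · exact stmt17_sym_vert_comp hvert hsym a _
    have h1 : Set.ncard (Set.range f) ≤ Set.ncard M :=
      le_trans (Set.ncard_le_ncard hA (M.toFinite.image f)) (Set.ncard_image_le M.toFinite)
    have h2 : Set.ncard M ≤ Fintype.card (Sym (Fin (2 ^ 2)) n) := by
      rw [← Nat.card_coe_set_eq, ← Nat.card_eq_fintype_card]
      refine Nat.card_le_card_of_injective
        (fun a => (⟨Multiset.map (e ∘ (a : Fin n → Fin 2 → Fin 2)) Finset.univ.val,
          by simp⟩ : Sym (Fin (2 ^ 2)) n)) ?_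
      rintro ⟨a, ha⟩ ⟨b, hb⟩ hab
      have hab' : Multiset.map (e ∘ a) Finset.univ.val
          = Multiset.map (e ∘ b) Finset.univ.val := congrArg Subtype.val hab
      rw [Fin.univ_val_map, Fin.univ_val_map, Multiset.coe_eq_coe] at hab'
      have hl : List.ofFn (e ∘ a) = List.ofFn (e ∘ b) :=
        List.Perm.eq_of_sortedLE ha.sortedLE_ofFn hb.sortedLE_ofFn hab'
      have : e ∘ a = e ∘ b := List.ofFn_injective hl
      exact Subtype.ext (funext fun i => e.injective (congrFun this i))
    have h3 : Fintype.card (Sym (Fin (2 ^ 2)) n) = (n + 1) * (n + 2) * (n + 3) / 6 := by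
      rw [Sym.card_sym_eq_multichoose, Fintype.card_fin, Nat.multichoose_eq]
      have h4 : 2 ^ 2 + n - 1 = n + 3 := by omega
      rw [h4]
      have h5 : (n + 3).choose n = (n + 3).choose 3 := by
        have := Nat.choose_symm (show 3 ≤ n + 3 by omega) (n := n + 3)
        simpa using this
      rw [h5, Nat.choose_eq_descFactorial_div_factorial]
      have hd : (n + 3).descFactorial 3 = (n + 1) * (n + 2) * (n + 3) := by
        simp [Nat.descFactorial]
        ring
      rw [hd]
      norm_num [Nat.factorial]
    calc Set.ncard (Set.range f) ≤ Set.ncard M := h1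
      _ ≤ Fintype.card (Sym (Fin (2 ^ 2)) n) := h2
      _ = (n + 1) * (n + 2) * (n + 3) / 6 := h3
  · intro p hp
    constructor
    · intro hmem
      have hlin := stmt17_sym_linear hsym
      have himg := hlin.image_convexHull (Set.range vert)
      have : sym p ∈ sym '' (convexHull ℝ (Set.range vert)) := ⟨p, hmem, rfl⟩
      rw [himg] at this
      rw [← stmt17_sym_eq_self hsym p hp]
      have hr : sym '' Set.range vert = Set.range f := by
        rw [← Set.range_comp]; rfl
      rwa [hr] at this
    · intro hmem
      refine convexHull_min ?_ (convex_convexHull ℝ _) hmem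
      rintro _ ⟨a, rfl⟩
      have hw1 : ∑ _σ : Equiv.Perm (Fin n), ((n.factorial : ℝ))⁻¹ = 1 := by
        rw [Finset.sum_const, Finset.card_univ, Fintype.card_perm, nsmul_eq_mul]
        simp only [Fintype.card_fin]
        exact mul_inv_cancel₀ (show (n.factorial : ℝ) ≠ 0 from Nat.cast_ne_zero.mpr n.factorial_ne_zero)
      have key : f a = ∑ σ : Equiv.Perm (Fin n),
          (n.factorial : ℝ)⁻¹ • vert (a ∘ ⇑σ⁻¹) := by
        show sym (vert a) = _
        rw [hsym, Finset.smul_sum]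
        refine Finset.sum_congr rfl fun σ _ => ?_
        congr 1
        funext sr
        obtain ⟨s, r⟩ := sr
        rw [stmt17_vert_eq hvert, inv_inv]
      rw [key, ← Finset.centerMass_eq_of_sum_1 _ _ hw1]
      exact Finset.centerMass_mem_convexHull _
        (fun _ _ => by positivity) (by rw [hw1]; norm_num)
        (fun σ _ => ⟨a ∘ ⇑σ⁻¹, rfl⟩)
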